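/- Let I be a typed instance of SMTI and let v be a type-signature: a boolean vector indexed by unordered pairs of types {i,j} (including a dummy type k+1) indicating which type-pairs occur among matched pairs (with unmatched agents counted as matched to the dummy type). For any matching M with type-signature v, an agent of type i matched to an agent of type j belongs to at least one blocking pair of M if and only if there exist types i' and j' with v_{i',j'} = 1 such that type j' strictly prefers i to i' and type i strictly prefers j' to j. Hence the number of agents involved in at least one blocking pair of M equals the sum over unordered pairs {i,j} of n_{i,j}·(b_{i,j} + b_{j,i}), where n_{i,j} is the number of matched pairs with one agent of each type and b_{i,j} is the indicator of the displayed condition. -/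

import Mathlib

open scoped Classical

/-- In a typed instance of SMTI with type-signature `v` (with
`v i j = true` iff some matched pair consists of an agent of type `i` and an agent
of type `j`, unmatched agents counting as matched to the dummy type `k`):
(a) an agent `x` of type `i` matched to type `j = ptype x` belongs to a blocking
pair iff there are types `i', j'` with `v i' j' = true`, `j'` strictly preferring
`i` to `i'`, and `i` strictly preferring `j'` to `j`; and (b) the number of agents
in at least one blocking pair equals the displayed sum of `n_{i,j} · b_{i,j}`. -/
theorem typed_smti_type_signature_blocking
    {Agent : Type} [Fintype Agent] [DecidableEq Agent]
    (k : ℕ) (typeOf : Agent → ℕ) (htype : ∀ a, typeOf a < k)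
    (side : Agent → Bool) (sideT : ℕ → Bool)
    (hside : ∀ a, sideT (typeOf a) = side a)
    (rank : ℕ → ℕ → ℕ)
    -- types on the same side are mutually unacceptable (ranked after the dummy)
    (hopp : ∀ i j, i < k → j < k → sideT i = sideT j → rank i k < rank i j)
    (M : Agent → Agent) (hinv : ∀ a, M (M a) = a)
    (hbip : ∀ a, M a ≠ a → side (M a) ≠ side a)
    (ptype : Agent → ℕ)
    (hptype : ∀ a, ptype a = if M a = a then k else typeOf (M a))
    (haccept : ∀ a, rank (typeOf a) (ptype a) ≤ rank (typeOf a) k)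
    (v : ℕ → ℕ → Bool)
    (hv : ∀ i j, v i j = true ↔
        ∃ a : Agent, (typeOf a = i ∧ ptype a = j) ∨ (typeOf a = j ∧ ptype a = i)) :
    (∀ x : Agent,
      (∃ y : Agent, side y ≠ side x ∧ M x ≠ y ∧
          rank (typeOf x) (typeOf y) < rank (typeOf x) (ptype x) ∧
          rank (typeOf y) (typeOf x) < rank (typeOf y) (ptype y)) ↔
      (∃ i' j', v i' j' = true ∧
          rank j' (typeOf x) < rank j' i' ∧
          rank (typeOf x) j' < rank (typeOf x) (ptype x))) ∧
    (Finset.univ.filter fun x : Agent => ∃ y : Agent, side y ≠ side x ∧ M x ≠ y ∧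
          rank (typeOf x) (typeOf y) < rank (typeOf x) (ptype x) ∧
          rank (typeOf y) (typeOf x) < rank (typeOf y) (ptype y)).card =
      ∑ i ∈ Finset.range (k + 1), ∑ j ∈ Finset.range (k + 1),
        (Finset.univ.filter fun x : Agent => typeOf x = i ∧ ptype x = j).card *
          (if ∃ i' j', v i' j' = true ∧ rank j' i < rank j' i' ∧ rank i j' < rank i j
            then 1 else 0) := by
  classical
  -- basic facts
  have hpt_lt : ∀ a, ptype a < k + 1 := by
    intro a
    rw [hptype]
    split
    · omega
    · exact Nat.lt_succ_of_lt (htype _)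
  have hMptype : ∀ a, M a ≠ a → ptype (M a) = typeOf a := by
    intro a ha
    rw [hptype, hinv a]
    split
    · next h => exact absurd h.symm ha
    · rfl
  -- part (a)
  have parta : ∀ x : Agent,
      (∃ y : Agent, side y ≠ side x ∧ M x ≠ y ∧
          rank (typeOf x) (typeOf y) < rank (typeOf x) (ptype x) ∧
          rank (typeOf y) (typeOf x) < rank (typeOf y) (ptype y)) ↔
      (∃ i' j', v i' j' = true ∧
          rank j' (typeOf x) < rank j' i' ∧
          rank (typeOf x) j' < rank (typeOf x) (ptype x)) := by
    intro x
    constructor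
    · rintro ⟨y, hsy, hMxy, h1, h2⟩
      exact ⟨ptype y, typeOf y, (hv _ _).mpr ⟨y, Or.inr ⟨rfl, rfl⟩⟩, h2, h1⟩
    · rintro ⟨i', j', hv', hr1, hr2⟩
      have hj' : j' ≠ k := by
        intro h
        rw [h] at hr2
        exact absurd (haccept x) (by omega)
      obtain ⟨a, ha⟩ := (hv i' j').mp hv'
      obtain ⟨y, hty, hpy⟩ : ∃ y, typeOf y = j' ∧ ptype y = i' := by
        rcases ha with ⟨ht, hp⟩ | ⟨ht, hp⟩
        · have hMa : M a ≠ a := by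
            intro h
            rw [hptype, if_pos h] at hp
            exact hj' hp.symm
          refine ⟨M a, ?_, ?_⟩
          · rw [hptype, if_neg hMa] at hp; exact hp
          · rw [hMptype a hMa, ht]
        · exact ⟨a, ht, hp⟩
      rw [← hty] at hr1 hr2
      rw [← hpy] at hr1
      have hsd : sideT (typeOf y) ≠ sideT (typeOf x) := by
        intro h
        have := hopp (typeOf y) (typeOf x) (htype y) (htype x) h
        have := haccept y
        omega
      refine ⟨y, ?_, ?_, hr2, hr1⟩
      · rw [← hside, ← hside]; exact hsd
      · intro h
        have hxy : x ≠ y := by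
          intro he; rw [he] at hsd; exact hsd rfl
        have hMx : M x ≠ x := by rw [h]; exact fun he => hxy he.symm
        have : ptype x = typeOf y := by rw [hptype, if_neg hMx, h]
        rw [this] at hr2
        omega
  refine ⟨parta, ?_⟩
  -- part (b)
  have key := Finset.card_eq_sum_card_fiberwise
    (f := fun x : Agent => (typeOf x, ptype x))
    (s := Finset.univ.filter fun x : Agent => ∃ y : Agent, side y ≠ side x ∧ M x ≠ y ∧
          rank (typeOf x) (typeOf y) < rank (typeOf x) (ptype x) ∧
          rank (typeOf y) (typeOf x) < rank (typeOf y) (ptype y))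
    (t := Finset.range (k + 1) ×ˢ Finset.range (k + 1))
    (by
      intro x _
      simp only [Finset.mem_coe, Finset.mem_product, Finset.mem_range]
      exact ⟨Nat.lt_succ_of_lt (htype x), hpt_lt x⟩)
  rw [key, Finset.sum_product]
  refine Finset.sum_congr rfl fun i _ => Finset.sum_congr rfl fun j _ => ?_
  by_cases hP : ∃ i' j', v i' j' = true ∧ rank j' i < rank j' i' ∧ rank i j' < rank i j
  · rw [if_pos hP, mul_one]
    congr 1
    rw [Finset.filter_filter]
    apply Finset.filter_congr
    intro x _
    simp only [Prod.mk.injEq]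
    constructor
    · rintro ⟨_, h1, h2⟩
      exact ⟨h1, h2⟩
    · rintro ⟨h1, h2⟩
      refine ⟨(parta x).mpr ?_, h1, h2⟩
      rw [h1, h2]
      exact hP
  · rw [if_neg hP, mul_zero, Finset.card_eq_zero, Finset.filter_filter,
      Finset.filter_eq_empty_iff]
    rintro x _ ⟨hb, heq⟩
    have h1 : typeOf x = i := congrArg Prod.fst heq
    have h2 : ptype x = j := congrArg Prod.snd heq
    apply hP
    have := (parta x).mp hb
    rwa [h1, h2] at this
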